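/- Let (G_j) be a sequence of finite graphs with e(G_j) → ∞ as j → ∞, fix r > 0, and set p_j = r/√(2e(G_j)). Then the family of random variables (e(S_{p_j}(G_j)))_{j∈ℕ}, the numbers of non-loop edges of the p_j-sampled subgraphs, is uniformly integrable if and only if the sequence (G_j) is uniformly sampling regular. -/

import Mathlib

open Filter Finset
open scoped Classical ENNReal

/-- A finite graph on vertex set `Fin n`, possibly with loops, without multiple edges. -/
structure FinGraph where
  n : ℕ
  adj : Fin n → Fin n → Bool
  symm : ∀ i j, adj i j = adj j i

namespace FinGraph

/-- Number of vertices. -/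
def v (G : FinGraph) : ℕ := G.n

/-- Number of non-loop edges. -/
def e (G : FinGraph) : ℕ :=
  ((univ : Finset (Fin G.n × Fin G.n)).filter
    (fun q => G.adj q.1 q.2 = true ∧ q.1 < q.2)).card

/-- Number of loops. -/
def loops (G : FinGraph) : ℕ :=
  ((univ : Finset (Fin G.n)).filter (fun i => G.adj i i = true)).card

/-- Degree of a vertex (number of neighbours via non-loop edges). -/
def deg (G : FinGraph) (i : Fin G.n) : ℕ :=
  ((univ : Finset (Fin G.n)).filter (fun j => G.adj i j = true ∧ j ≠ i)).card

/-- A graph is loopless when no vertex is adjacent to itself. -/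
def Loopless (G : FinGraph) : Prop := ∀ i, G.adj i i = false

/-- The induced subgraph on a set `S` of vertices. -/
def induce (G : FinGraph) (S : Finset (Fin G.n)) : FinGraph where
  n := S.card
  adj i j := G.adj (S.orderIsoOfFin rfl i).1 (S.orderIsoOfFin rfl j).1
  symm i j := G.symm _ _

/-- The graph obtained by discarding all isolated vertices (vertices in no edge,
loop or non-loop). -/
def core (G : FinGraph) : FinGraph :=
  G.induce ((univ : Finset (Fin G.n)).filter (fun i => ∃ j, G.adj i j = true))

/-- Graph isomorphism. -/
def Iso (G H : FinGraph) : Prop :=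
  ∃ eqv : Fin G.n ≃ Fin H.n, ∀ i j, G.adj i j = H.adj (eqv i) (eqv j)

/-- Average degree `d̄(G)`. -/
noncomputable def avgDeg (G : FinGraph) : ℝ :=
  (1 / (G.n : ℝ)) * ∑ i : Fin G.n, (G.deg i : ℝ)

/-- Square average degree `d²̄(G)`. -/
noncomputable def sqAvgDeg (G : FinGraph) : ℝ :=
  (1 / (G.n : ℝ)) * ∑ i : Fin G.n, (G.deg i : ℝ) ^ 2

/-- Edge density `ρ(G) = 2e(G)/v(G)²`. -/
noncomputable def density (G : FinGraph) : ℝ :=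
  2 * (G.e : ℝ) / (G.n : ℝ) ^ 2

end FinGraph

/-- Unlabeled finite graphs: isomorphism classes of finite graphs. -/
def UGraph := Quot FinGraph.Iso

/-- The isomorphism class of a finite graph. -/
def FinGraph.cls (G : FinGraph) : UGraph := Quot.mk _ G

/-- Probability that independent Bernoulli(min p 1) vertex selection picks exactly `S`. -/
noncomputable def sampleWeight (G : FinGraph) (p : ℝ) (S : Finset (Fin G.n)) : ℝ :=
  (min p 1) ^ S.card * (1 - min p 1) ^ (G.n - S.card)

/-- Law (pmf) of the `p`-sampling `S_p(G)`: keep each vertex independently with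
probability `min p 1`, take the induced subgraph, discard isolated vertices,
and pass to the isomorphism class. -/
noncomputable def pSampleLaw (G : FinGraph) (p : ℝ) : UGraph → ℝ := fun H =>
  ∑ S ∈ (univ : Finset (Fin G.n)).powerset,
    sampleWeight G p S * (if ((G.induce S).core).cls = H then 1 else 0)

/-- The graph on `Fin k` pulled back along a vertex sample `x`. -/
def seqGraph (G : FinGraph) (k : ℕ) (x : Fin k → Fin G.n) : FinGraph where
  n := k
  adj i j := G.adj (x i) (x j)
  symm i j := G.symm _ _

/-- Law (pmf) of the with-replacement `p`-sampling `S̃_p(G)`: draw `K ~ Poisson(p·v(G))`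
vertices uniformly with replacement, form the graph on `Fin K` in which `i, j` are joined
whenever `(x_i, x_j)` is an edge of `G`, discard isolated vertices, and pass to the
isomorphism class. -/
noncomputable def wrSampleLaw (G : FinGraph) (p : ℝ) : UGraph → ℝ := fun H =>
  ∑' k : ℕ,
    (Real.exp (-(p * (G.v : ℝ))) * (p * (G.v : ℝ)) ^ k / (Nat.factorial k : ℝ)) *
      ((((univ : Finset (Fin k → Fin G.n)).filter
          (fun x => ((seqGraph G k x).core).cls = H)).card : ℝ) / ((G.v : ℝ)) ^ k)

/-- Total variation distance `sup_A |P(A) − Q(A)|` between two pmf-style laws on a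
countable discrete space. -/
noncomputable def dTV {α : Type*} (f g : α → ℝ) : ℝ :=
  ⨆ A : Set α, |∑' x : A, (f x.1 - g x.1)|

/-- `∑_i d_i · 1[d_i > k·√(e(G))]`, the total degree of vertices of degree exceeding
`k·√(e(G))`. -/
noncomputable def tailDegSum (G : FinGraph) (k : ℝ) : ℝ :=
  ∑ i : Fin G.n,
    (if k * Real.sqrt (G.e : ℝ) < (G.deg i : ℝ) then (G.deg i : ℝ) else 0)

/-- A sequence of graphs is uniformly sampling regular. -/
def UniformlySamplingRegular (G : ℕ → FinGraph) : Prop :=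
  ∀ ε : ℝ, 0 < ε → ∃ k : ℝ, 0 < k ∧ ∀ j,
    (1 / ((G j).e : ℝ)) * tailDegSum (G j) k < ε

/-- `E[e(S_p(G)) · 1[e(S_p(G)) > M]]`, the tail expectation of the number of non-loop
edges of the `p`-sampled subgraph (discarding isolated vertices does not change it). -/
noncomputable def expEdgeTail (G : FinGraph) (p M : ℝ) : ℝ :=
  ∑ S ∈ (univ : Finset (Fin G.n)).powerset,
    sampleWeight G p S *
      (if M < ((G.induce S).e : ℝ) then ((G.induce S).e : ℝ) else 0)

/-- `E[e(S_p(G))]`, the expected number of non-loop edges of the `p`-sampled subgraph. -/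
noncomputable def expEdge (G : FinGraph) (p : ℝ) : ℝ :=
  ∑ S ∈ (univ : Finset (Fin G.n)).powerset,
    sampleWeight G p S * ((G.induce S).e : ℝ)

/-- Law (pmf on ℕ) of the number of non-loop edges of the `p`-sampled subgraph. -/
noncomputable def edgeLaw (G : FinGraph) (p : ℝ) (m : ℕ) : ℝ :=
  ∑ S ∈ (univ : Finset (Fin G.n)).powerset,
    sampleWeight G p S * (if (G.induce S).e = m then 1 else 0)

/-- Number of kept neighbours (via non-loop edges) of vertex `i` under the selection `S`. -/
def keptNbrCount (G : FinGraph) (S : Finset (Fin G.n)) (i : Fin G.n) : ℕ :=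
  ((univ : Finset (Fin G.n)).filter (fun j => G.adj i j = true ∧ j ≠ i ∧ j ∈ S)).card

/-- `Pr(D_i ≥ 2)`: the probability that vertex `i` is kept and has at least two kept
neighbours, under independent Bernoulli(min p 1) vertex selection. -/
noncomputable def probD2 (G : FinGraph) (p : ℝ) (i : Fin G.n) : ℝ :=
  ∑ S ∈ (univ : Finset (Fin G.n)).powerset,
    sampleWeight G p S * (if i ∈ S ∧ 2 ≤ keptNbrCount G S i then 1 else 0)

/-- Probability that some kept vertex has at least two kept neighbours. -/
noncomputable def probSomeD2 (G : FinGraph) (p : ℝ) : ℝ :=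
  ∑ S ∈ (univ : Finset (Fin G.n)).powerset,
    sampleWeight G p S * (if ∃ i ∈ S, 2 ≤ keptNbrCount G S i then 1 else 0)

/-- Number of isolated kept (non-loop) edges: both endpoints kept, and each endpoint has
exactly one kept neighbour. -/
def isoEdgeCount (G : FinGraph) (S : Finset (Fin G.n)) : ℕ :=
  ((univ : Finset (Fin G.n × Fin G.n)).filter (fun q =>
    G.adj q.1 q.2 = true ∧ q.1 < q.2 ∧ q.1 ∈ S ∧ q.2 ∈ S ∧
    keptNbrCount G S q.1 = 1 ∧ keptNbrCount G S q.2 = 1)).card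

section Machinery

open FinGraph

namespace FinGraph
variable (G : FinGraph)

/-- kept edges, as increasing pairs -/
def EE (S : Finset (Fin G.n)) : Finset (Fin G.n × Fin G.n) :=
  (univ : Finset (Fin G.n × Fin G.n)).filter
    (fun q => G.adj q.1 q.2 = true ∧ q.1 < q.2 ∧ q.1 ∈ S ∧ q.2 ∈ S)

lemma induce_e (S : Finset (Fin G.n)) : (G.induce S).e = (G.EE S).card := by
  classical
  unfold e EE
  apply Finset.card_nbij
    (fun q => (((S.orderIsoOfFin rfl q.1 : {x // x ∈ S}) : Fin G.n),
               ((S.orderIsoOfFin rfl q.2 : {x // x ∈ S}) : Fin G.n)))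
  · intro a ha
    simp only [mem_coe, mem_filter, mem_univ, true_and] at ha ⊢
    refine ⟨ha.1, ?_, (S.orderIsoOfFin rfl a.1).2, (S.orderIsoOfFin rfl a.2).2⟩
    exact (Subtype.coe_lt_coe).2 ((S.orderIsoOfFin rfl).lt_iff_lt.2 ha.2)
  · intro a _ b _ h
    simp only [Prod.mk.injEq] at h
    have h1 : (S.orderIsoOfFin rfl) a.1 = (S.orderIsoOfFin rfl) b.1 := Subtype.ext h.1
    have h2 : (S.orderIsoOfFin rfl) a.2 = (S.orderIsoOfFin rfl) b.2 := Subtype.ext h.2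
    exact Prod.ext ((S.orderIsoOfFin rfl).injective h1) ((S.orderIsoOfFin rfl).injective h2)
  · intro q hq
    simp only [coe_filter, Set.mem_setOf_eq, mem_univ, true_and, mem_coe] at hq
    obtain ⟨hadj, hlt, h1, h2⟩ := hq
    refine ⟨((S.orderIsoOfFin rfl).symm ⟨q.1, h1⟩, (S.orderIsoOfFin rfl).symm ⟨q.2, h2⟩), ?_, ?_⟩
    · simp only [coe_filter, Set.mem_setOf_eq, mem_univ, true_and]
      constructor
      · show G.adj ((S.orderIsoOfFin rfl) ((S.orderIsoOfFin rfl).symm ⟨q.1, h1⟩) : Fin G.n) _ = true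
        simpa using hadj
      · exact (S.orderIsoOfFin rfl).symm.strictMono (show (⟨q.1, h1⟩ : {x // x ∈ S}) < ⟨q.2, h2⟩ from hlt)
    · simp

/-- kept ordered pairs -/
def AP (S : Finset (Fin G.n)) : Finset (Fin G.n × Fin G.n) :=
  (univ : Finset (Fin G.n × Fin G.n)).filter
    (fun q => G.adj q.1 q.2 = true ∧ q.1 ≠ q.2 ∧ q.1 ∈ S ∧ q.2 ∈ S)

lemma EE_card_le (S : Finset (Fin G.n)) : (G.EE S).card ≤ G.e := by
  apply Finset.card_le_card
  intro q hq
  simp only [EE, mem_filter, mem_univ, true_and] at hq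
  simp only [e, mem_filter, mem_univ, true_and]
  exact ⟨hq.1, hq.2.1⟩

lemma EE_univ_card : (G.EE univ).card = G.e := by
  unfold EE e
  congr 1
  apply Finset.filter_congr
  intro q _
  simp

lemma AP_card (S : Finset (Fin G.n)) :
    (G.AP S).card = ∑ i : Fin G.n, if i ∈ S then keptNbrCount G S i else 0 := by
  rw [Finset.card_eq_sum_card_fiberwise (f := fun q => q.1) (t := univ) (fun x _ => mem_univ _)]
  apply Finset.sum_congr rfl
  intro i _
  by_cases hi : i ∈ S
  · rw [if_pos hi]
    unfold keptNbrCount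
    apply Finset.card_nbij (fun q => q.2)
    · intro a ha
      simp only [mem_coe, AP, mem_filter, mem_univ, true_and] at ha
      obtain ⟨⟨h1, h2, h3, h4⟩, h5⟩ := ha
      subst h5
      simp only [mem_coe, mem_filter, mem_univ, true_and]
      exact ⟨h1, fun h => h2 h.symm, h4⟩
    · intro a ha b hb h
      simp only [coe_filter, Set.mem_setOf_eq] at ha hb
      exact Prod.ext (ha.2.trans hb.2.symm) h
    · intro j hj
      simp only [coe_filter, Set.mem_setOf_eq, mem_univ, true_and, mem_coe] at hj
      refine ⟨(i, j), ?_, rfl⟩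
      simp only [coe_filter, Set.mem_setOf_eq, AP, mem_filter, mem_univ, true_and]
      exact ⟨⟨hj.1, fun h => hj.2.1 h.symm, hi, hj.2.2⟩, trivial⟩
  · rw [if_neg hi]
    rw [Finset.card_eq_zero, Finset.filter_eq_empty_iff]
    intro q hq
    simp only [AP, mem_filter, mem_univ, true_and] at hq
    intro h
    exact hi (h ▸ hq.2.2.1)

lemma AP_card_two (S : Finset (Fin G.n)) : (G.AP S).card = 2 * (G.EE S).card := by
  classical
  have hsplit := Finset.card_filter_add_card_filter_not
    (s := G.AP S) (p := fun q => q.1 < q.2)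
  have h1 : (G.AP S).filter (fun q => q.1 < q.2) = G.EE S := by
    unfold AP EE
    rw [Finset.filter_filter]
    apply Finset.filter_congr
    intro q _
    constructor
    · rintro ⟨⟨a, b, c, d⟩, e⟩; exact ⟨a, e, c, d⟩
    · rintro ⟨a, b, c, d⟩; exact ⟨⟨a, ne_of_lt b, c, d⟩, b⟩
  have h2 : ((G.AP S).filter (fun q => ¬ q.1 < q.2)).card = (G.EE S).card := by
    apply Finset.card_nbij (fun q => (q.2, q.1))
    · intro a ha
      simp only [mem_coe, AP, EE, mem_filter, mem_univ, true_and] at ha ⊢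
      obtain ⟨⟨h1, h2, h3, h4⟩, h5⟩ := ha
      refine ⟨by rw [← G.symm]; exact h1, ?_, h4, h3⟩
      rcases lt_or_gt_of_ne h2 with h | h
      · exact absurd h h5
      · exact h
    · intro a _ b _ h
      simp only [Prod.mk.injEq] at h
      exact Prod.ext h.2 h.1
    · intro q hq
      simp only [coe_filter, Set.mem_setOf_eq, mem_coe, EE, AP, mem_filter, mem_univ,
        true_and] at hq ⊢
      obtain ⟨h1, h2, h3, h4⟩ := hq
      exact ⟨(q.2, q.1), ⟨⟨by rw [← G.symm]; exact h1, (ne_of_lt h2).symm, h4, h3⟩,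
        not_lt_of_gt h2⟩, rfl⟩
  rw [h1] at hsplit
  omega

lemma keptNbrCount_le (S : Finset (Fin G.n)) (i : Fin G.n) (hi : i ∈ S) :
    keptNbrCount G S i ≤ (G.EE S).card := by
  unfold keptNbrCount
  apply Finset.card_le_card_of_injOn (fun j => if j < i then (j, i) else (i, j))
  · intro j hj
    simp only [mem_coe, mem_filter, mem_univ, true_and] at hj
    obtain ⟨h1, h2, h3⟩ := hj
    by_cases h : j < i
    · simp only [mem_coe, if_pos h, EE, mem_filter, mem_univ, true_and]
      exact ⟨by rw [← G.symm]; exact h1, h, h3, hi⟩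
    · simp only [mem_coe, if_neg h, EE, mem_filter, mem_univ, true_and]
      refine ⟨h1, ?_, hi, h3⟩
      rcases lt_or_gt_of_ne h2 with h' | h'
      · exact absurd h' h
      · exact h'
  · intro a _ b _ h
    simp only at h
    split_ifs at h with ha hb hb <;> simp only [Prod.mk.injEq] at h
    · exact h.1
    · exact absurd ha (by rw [h.1]; exact lt_irrefl i)
    · exact absurd hb (by rw [← h.1]; exact lt_irrefl i)
    · exact h.2

lemma keptNbrCount_univ (i : Fin G.n) : keptNbrCount G univ i = G.deg i := by
  unfold keptNbrCount deg
  congr 1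
  apply Finset.filter_congr
  intro j _
  simp

lemma deg_le_e (i : Fin G.n) : G.deg i ≤ G.e := by
  have h := G.keptNbrCount_le univ i (mem_univ i)
  rwa [keptNbrCount_univ, EE_univ_card] at h

lemma sum_deg : ∑ i : Fin G.n, G.deg i = 2 * G.e := by
  have h := G.AP_card univ
  rw [G.AP_card_two univ, G.EE_univ_card] at h
  rw [h]
  apply Finset.sum_congr rfl
  intro i _
  rw [if_pos (mem_univ i), keptNbrCount_univ]

lemma sampleWeight_nonneg {p : ℝ} (hp : 0 ≤ p) (S : Finset (Fin G.n)) :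
    0 ≤ sampleWeight G p S := by
  unfold sampleWeight
  have h0 : (0:ℝ) ≤ min p 1 := le_min hp zero_le_one
  have h1 : (0:ℝ) ≤ 1 - min p 1 := by
    have := min_le_right p 1; linarith
  exact mul_nonneg (pow_nonneg h0 _) (pow_nonneg h1 _)

/-- Expectation against the sampling weights. -/
noncomputable def Ew (p : ℝ) (f : Finset (Fin G.n) → ℝ) : ℝ :=
  ∑ S ∈ (univ : Finset (Fin G.n)).powerset, sampleWeight G p S * f S

lemma Ew_mono {p : ℝ} (hp : 0 ≤ p) {f g : Finset (Fin G.n) → ℝ}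
    (h : ∀ S, f S ≤ g S) : G.Ew p f ≤ G.Ew p g :=
  Finset.sum_le_sum fun S _ => mul_le_mul_of_nonneg_left (h S) (G.sampleWeight_nonneg hp S)

lemma Ew_congr {p : ℝ} {f g : Finset (Fin G.n) → ℝ}
    (h : ∀ S, f S = g S) : G.Ew p f = G.Ew p g := by
  unfold Ew
  exact Finset.sum_congr rfl fun S _ => by rw [h S]

lemma Ew_add {p : ℝ} (f g : Finset (Fin G.n) → ℝ) :
    G.Ew p (fun S => f S + g S) = G.Ew p f + G.Ew p g := by
  unfold Ew
  rw [← Finset.sum_add_distrib]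
  exact Finset.sum_congr rfl fun S _ => by ring

lemma Ew_sub {p : ℝ} (f g : Finset (Fin G.n) → ℝ) :
    G.Ew p (fun S => f S - g S) = G.Ew p f - G.Ew p g := by
  unfold Ew
  rw [← Finset.sum_sub_distrib]
  exact Finset.sum_congr rfl fun S _ => by ring

lemma Ew_smul {p : ℝ} (c : ℝ) (f : Finset (Fin G.n) → ℝ) :
    G.Ew p (fun S => c * f S) = c * G.Ew p f := by
  unfold Ew
  rw [Finset.mul_sum]
  exact Finset.sum_congr rfl fun S _ => by ring

lemma Ew_indicator {p : ℝ} (hp : 0 ≤ p) (T : Finset (Fin G.n)) :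
    G.Ew p (fun S => if T ⊆ S then (1:ℝ) else 0) = (min p 1) ^ T.card := by
  set q := min p 1 with hqdef
  have key : ∀ S ∈ (univ : Finset (Fin G.n)).powerset,
      sampleWeight G p S * (if T ⊆ S then (1:ℝ) else 0) =
      (∏ _i ∈ S, q) * ∏ i ∈ (univ : Finset (Fin G.n)) \ S, (if i ∈ T then 0 else (1-q)) := by
    intro S _
    by_cases hTS : T ⊆ S
    · rw [if_pos hTS]
      have h2 : ∏ i ∈ (univ : Finset (Fin G.n)) \ S, (if i ∈ T then (0:ℝ) else (1-q)) =
          ∏ _i ∈ (univ : Finset (Fin G.n)) \ S, (1-q) := by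
        apply Finset.prod_congr rfl
        intro i hi
        rw [if_neg]
        intro hiT
        exact (mem_sdiff.1 hi).2 (hTS hiT)
      rw [h2, Finset.prod_const, Finset.prod_const, Finset.card_sdiff_of_subset (subset_univ S),
        Finset.card_univ, Fintype.card_fin]
      simp [sampleWeight, hqdef]
    · rw [if_neg hTS, mul_zero]
      obtain ⟨i, hiT, hiS⟩ := Finset.not_subset.1 hTS
      have hz : ∏ j ∈ (univ : Finset (Fin G.n)) \ S, (if j ∈ T then (0:ℝ) else (1-q)) = 0 :=
        Finset.prod_eq_zero (Finset.mem_sdiff.2 ⟨mem_univ i, hiS⟩) (if_pos hiT)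
      rw [hz, mul_zero]
  rw [Ew, Finset.sum_congr rfl key]
  have := (Finset.prod_add (fun _ : Fin G.n => q)
    (fun i => if i ∈ T then (0:ℝ) else (1-q)) univ).symm
  rw [this]
  have h3 : ∀ i ∈ (univ : Finset (Fin G.n)),
      (q + if i ∈ T then (0:ℝ) else (1-q)) = if i ∈ T then q else 1 := by
    intro i _
    by_cases hi : i ∈ T <;> simp [hi]
  rw [Finset.prod_congr rfl h3, Finset.prod_ite, Finset.prod_const, Finset.prod_const, one_pow,
    mul_one]
  congr 1
  rw [Finset.filter_mem_eq_inter, Finset.univ_inter]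

lemma Ew_sum {p : ℝ} {ι : Type*} (F : Finset ι) (f : ι → Finset (Fin G.n) → ℝ) :
    G.Ew p (fun S => ∑ a ∈ F, f a S) = ∑ a ∈ F, G.Ew p (f a) := by
  unfold Ew
  rw [Finset.sum_comm]
  apply Finset.sum_congr rfl
  intro S _
  rw [Finset.mul_sum]

lemma Ew_single {p : ℝ} (hp : 0 ≤ p) (i : Fin G.n) :
    G.Ew p (fun S => if i ∈ S then (1:ℝ) else 0) = min p 1 := by
  have h := G.Ew_indicator hp {i}
  rw [Finset.card_singleton, pow_one] at h
  rw [← h]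
  apply G.Ew_congr
  intro S
  simp [Finset.singleton_subset_iff]

lemma Ew_pair {p : ℝ} (hp : 0 ≤ p) (a : Fin G.n × Fin G.n) (hne : a.1 ≠ a.2) :
    G.Ew p (fun S => if a.1 ∈ S ∧ a.2 ∈ S then (1:ℝ) else 0) = (min p 1) ^ 2 := by
  have h := G.Ew_indicator hp {a.1, a.2}
  rw [Finset.card_insert_of_notMem (by simp [hne]), Finset.card_singleton] at h
  rw [← h]
  apply G.Ew_congr
  intro S
  congr 1
  simp [Finset.insert_subset_iff]

end FinGraph

lemma expEdgeTail_eq (G : FinGraph) (p M : ℝ) :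
    expEdgeTail G p M =
      G.Ew p (fun S => if M < ((G.induce S).e : ℝ) then ((G.induce S).e : ℝ) else 0) := rfl

lemma expEdgeTail_mono (G : FinGraph) {p M M' : ℝ} (hp : 0 ≤ p) (h : M ≤ M') :
    expEdgeTail G p M' ≤ expEdgeTail G p M := by
  rw [expEdgeTail_eq, expEdgeTail_eq]
  apply G.Ew_mono hp
  intro S
  by_cases hM' : M' < ((G.induce S).e : ℝ)
  · rw [if_pos hM', if_pos (lt_of_le_of_lt h hM')]
  · rw [if_neg hM']
    split_ifs
    · exact Nat.cast_nonneg _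
    · exact le_refl 0

/-- The key lower bound: half the sum over any vertex set `H` of `q²·dᵢ - M·q`
bounds the tail expectation from below. -/
lemma lowerBound (G : FinGraph) {p M : ℝ} (hp : 0 ≤ p) (hM : 1 ≤ M)
    (H : Finset (Fin G.n)) :
    (1/2) * ∑ i ∈ H, ((min p 1)^2 * (G.deg i : ℝ) - M * (min p 1)) ≤ expEdgeTail G p M := by
  classical
  set q := min p 1 with hq
  -- the auxiliary random variable
  set g : Finset (Fin G.n) → ℝ :=
    fun S => (1/2) * ∑ i ∈ H, (if i ∈ S then ((keptNbrCount G S i : ℝ) - M) else 0) with hgdef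
  have hEg : G.Ew p g = (1/2) * ∑ i ∈ H, (q^2 * (G.deg i : ℝ) - M * q) := by
    rw [hgdef, G.Ew_smul, G.Ew_sum]
    congr 1
    apply Finset.sum_congr rfl
    intro i _
    have hsplit : ∀ S : Finset (Fin G.n),
        (if i ∈ S then ((keptNbrCount G S i : ℝ) - M) else 0) =
        (∑ j ∈ (univ : Finset (Fin G.n)).filter (fun j => G.adj i j = true ∧ j ≠ i),
          if i ∈ S ∧ j ∈ S then (1:ℝ) else 0) - M * (if i ∈ S then 1 else 0) := by
      intro S
      by_cases hi : i ∈ S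
      · rw [if_pos hi, if_pos hi, mul_one]
        congr 1
        have : ∀ j ∈ (univ : Finset (Fin G.n)).filter (fun j => G.adj i j = true ∧ j ≠ i),
            (if i ∈ S ∧ j ∈ S then (1:ℝ) else 0) = (if j ∈ S then (1:ℝ) else 0) := by
          intro j _
          by_cases hj : j ∈ S <;> simp [hj, hi]
        rw [Finset.sum_congr rfl this, Finset.sum_boole]
        unfold keptNbrCount
        rw [Finset.filter_filter]
        norm_cast
        congr 1
        apply Finset.filter_congr
        intro j _
        tauto
      · rw [if_neg hi, if_neg hi, mul_zero, sub_zero]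
        symm
        apply Finset.sum_eq_zero
        intro j _
        rw [if_neg (fun h => hi h.1)]
    rw [G.Ew_congr hsplit, G.Ew_sub, G.Ew_sum, G.Ew_smul, G.Ew_single hp i]
    have : ∀ j ∈ (univ : Finset (Fin G.n)).filter (fun j => G.adj i j = true ∧ j ≠ i),
        G.Ew p (fun S => if i ∈ S ∧ j ∈ S then (1:ℝ) else 0) = q ^ 2 := by
      intro j hj
      simp only [mem_filter, mem_univ, true_and] at hj
      exact G.Ew_pair hp (i, j) (fun h => hj.2 h.symm)
    rw [Finset.sum_congr rfl this, Finset.sum_const]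
    rw [deg]
    push_cast
    try ring
    try rfl
  rw [← hEg, expEdgeTail_eq]
  apply G.Ew_mono hp
  -- pointwise bound
  intro S
  rw [G.induce_e S]
  set X : ℝ := ((G.EE S).card : ℝ) with hX
  have hX0 : 0 ≤ X := Nat.cast_nonneg _
  have h2X : ∑ i : Fin G.n, (if i ∈ S then ((keptNbrCount G S i : ℝ)) else 0) = 2 * X := by
    have h := G.AP_card S
    rw [G.AP_card_two S] at h
    have := congrArg (fun m : ℕ => (m : ℝ)) h
    push_cast at this
    rw [← this]
  set R2 : ℝ := ∑ i : Fin G.n,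
    (if i ∈ S then (if M < (keptNbrCount G S i : ℝ) then (keptNbrCount G S i : ℝ) else 0) else 0)
    with hR2
  have hg_le : g S ≤ (1/2) * R2 := by
    rw [hgdef]
    apply mul_le_mul_of_nonneg_left _ (by norm_num)
    calc ∑ i ∈ H, (if i ∈ S then ((keptNbrCount G S i : ℝ) - M) else 0)
        ≤ ∑ i ∈ H, (if i ∈ S then
            (if M < (keptNbrCount G S i : ℝ) then (keptNbrCount G S i : ℝ) else 0) else 0) := by
          apply Finset.sum_le_sum
          intro i _
          by_cases hi : i ∈ S
          · rw [if_pos hi, if_pos hi]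
            by_cases hMi : M < (keptNbrCount G S i : ℝ)
            · rw [if_pos hMi]; linarith
            · rw [if_neg hMi]; push_neg at hMi; linarith
          · rw [if_neg hi, if_neg hi]
      _ ≤ R2 := by
          apply Finset.sum_le_sum_of_subset_of_nonneg (Finset.subset_univ H)
          intro i _ _
          split_ifs
          · exact Nat.cast_nonneg _
          · exact le_refl 0
          · exact le_refl 0
  have hR2_le : (1/2) * R2 ≤ (if M < X then X else 0) := by
    by_cases hex : ∃ i, i ∈ S ∧ M < (keptNbrCount G S i : ℝ)
    · obtain ⟨i, hiS, hMi⟩ := hex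
      have hXi : (keptNbrCount G S i : ℝ) ≤ X := by
        rw [hX]
        exact_mod_cast G.keptNbrCount_le S i hiS
      rw [if_pos (lt_of_lt_of_le hMi hXi)]
      have : R2 ≤ 2 * X := by
        rw [hR2, ← h2X]
        apply Finset.sum_le_sum
        intro j _
        by_cases hj : j ∈ S
        · rw [if_pos hj, if_pos hj]
          split_ifs
          · exact le_refl _
          · exact Nat.cast_nonneg _
        · rw [if_neg hj, if_neg hj]
      linarith
    · push_neg at hex
      have : R2 = 0 := by
        rw [hR2]
        apply Finset.sum_eq_zero
        intro i _
        by_cases hi : i ∈ S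
        · rw [if_pos hi, if_neg (not_lt.2 (hex i hi))]
        · rw [if_neg hi]
      rw [this, mul_zero]
      split_ifs
      · exact hX0
      · exact le_refl 0
  exact le_trans hg_le hR2_le

end Machinery

section UpperBound

namespace FinGraph
variable (G : FinGraph)

/-- vertex set of two pairs, as a finset -/
def Uv (a b : Fin G.n × Fin G.n) : Finset (Fin G.n) := insert a.1 (insert a.2 {b.1, b.2})

def share (a b : Fin G.n × Fin G.n) : Prop :=
  a.1 = b.1 ∨ a.1 = b.2 ∨ a.2 = b.1 ∨ a.2 = b.2

lemma two_le_cardU {a b : Fin G.n × Fin G.n} (ha : a.1 ≠ a.2) : 2 ≤ (G.Uv a b).card := by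
  have hsub : ({a.1, a.2} : Finset (Fin G.n)) ⊆ G.Uv a b := by
    intro x hx
    simp only [mem_insert, mem_singleton] at hx
    rcases hx with h | h <;> simp [Uv, h]
  have := Finset.card_le_card hsub
  rwa [Finset.card_insert_of_notMem (by simp [ha]), Finset.card_singleton] at this

lemma pair_eq_of_seteq {a b : Fin G.n × Fin G.n} (ha : a.1 < a.2) (hb : b.1 < b.2)
    (h : ({a.1, a.2} : Finset (Fin G.n)) = ({b.1, b.2} : Finset (Fin G.n))) : a = b := by
  have h1 : a.1 ∈ ({b.1, b.2} : Finset (Fin G.n)) := h ▸ (by simp)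
  have h2 : a.2 ∈ ({b.1, b.2} : Finset (Fin G.n)) := h ▸ (by simp)
  simp only [mem_insert, mem_singleton] at h1 h2
  apply Prod.ext
  · rcases h1 with h1 | h1
    · exact h1
    · exfalso
      rcases h2 with h2 | h2
      · exact absurd (h2 ▸ h1 ▸ ha) (lt_asymm hb)
      · exact absurd (h2 ▸ h1 ▸ ha) (lt_irrefl _)
  · rcases h2 with h2 | h2
    · exfalso
      rcases h1 with h1 | h1
      · exact absurd (h2 ▸ h1 ▸ ha) (lt_irrefl _)
      · exact absurd (h2 ▸ h1 ▸ ha) (lt_asymm hb)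
    · exact h2

lemma three_le_cardU {a b : Fin G.n × Fin G.n} (ha : a.1 < a.2) (hb : b.1 < b.2)
    (hne : a ≠ b) : 3 ≤ (G.Uv a b).card := by
  have hU : G.Uv a b = ({a.1, a.2} : Finset (Fin G.n)) ∪ ({b.1, b.2} : Finset (Fin G.n)) := by
    ext x; simp [Uv]; tauto
  by_cases hsub : ({b.1, b.2} : Finset (Fin G.n)) ⊆ ({a.1, a.2} : Finset (Fin G.n))
  · exfalso
    have hca : ({a.1, a.2} : Finset (Fin G.n)).card = 2 := by
      rw [Finset.card_insert_of_notMem (by simp [ne_of_lt ha]), Finset.card_singleton]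
    have hcb : ({b.1, b.2} : Finset (Fin G.n)).card = 2 := by
      rw [Finset.card_insert_of_notMem (by simp [ne_of_lt hb]), Finset.card_singleton]
    have heq := Finset.eq_of_subset_of_card_le hsub (by omega)
    exact hne (G.pair_eq_of_seteq ha hb heq.symm)
  · obtain ⟨x, hxB, hxA⟩ := Finset.not_subset.1 hsub
    have hsub2 : insert x ({a.1, a.2} : Finset (Fin G.n)) ⊆ G.Uv a b := by
      rw [hU]
      intro y hy
      simp only [mem_insert, mem_singleton] at hy
      rcases hy with h | h | h
      · exact Finset.mem_union_right _ (h ▸ hxB)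
      · exact Finset.mem_union_left _ (by simp [h])
      · exact Finset.mem_union_left _ (by simp [h])
    have := Finset.card_le_card hsub2
    rwa [Finset.card_insert_of_notMem hxA,
      Finset.card_insert_of_notMem (by simp [ne_of_lt ha]), Finset.card_singleton] at this

lemma four_le_cardU {a b : Fin G.n × Fin G.n} (ha : a.1 < a.2) (hb : b.1 < b.2)
    (hsh : ¬ G.share a b) : 4 ≤ (G.Uv a b).card := by
  unfold share at hsh
  push_neg at hsh
  obtain ⟨h1, h2, h3, h4⟩ := hsh
  have : (G.Uv a b).card = 4 := by
    unfold Uv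
    rw [Finset.card_insert_of_notMem (by simp [ne_of_lt ha, h1, h2]),
      Finset.card_insert_of_notMem (by simp [h3, h4]),
      Finset.card_insert_of_notMem (by simp [ne_of_lt hb]), Finset.card_singleton]
  omega

lemma Ew_quad {p : ℝ} (hp : 0 ≤ p) (a b : Fin G.n × Fin G.n) :
    G.Ew p (fun S => if a.1 ∈ S ∧ a.2 ∈ S ∧ b.1 ∈ S ∧ b.2 ∈ S then (1:ℝ) else 0)
      = (min p 1) ^ (G.Uv a b).card := by
  rw [← G.Ew_indicator hp (G.Uv a b)]
  apply G.Ew_congr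
  intro S
  congr 1
  simp [Uv, Finset.insert_subset_iff]
  try tauto

/-- edges with neither endpoint in `H` -/
def SEs (H : Finset (Fin G.n)) : Finset (Fin G.n × Fin G.n) :=
  (G.EE univ).filter (fun a => a.1 ∉ H ∧ a.2 ∉ H)

/-- edges with an endpoint in `H` -/
def HEs (H : Finset (Fin G.n)) : Finset (Fin G.n × Fin G.n) :=
  (G.EE univ).filter (fun a => a.1 ∈ H ∨ a.2 ∈ H)

/-- cherries centered outside `H` -/
def T3s (H : Finset (Fin G.n)) : Finset (Fin G.n × Fin G.n × Fin G.n) :=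
  (univ : Finset (Fin G.n × Fin G.n × Fin G.n)).filter
    (fun t => t.1 ∉ H ∧ G.adj t.1 t.2.1 = true ∧ G.adj t.1 t.2.2 = true ∧
      t.2.1 ≠ t.1 ∧ t.2.2 ≠ t.1)

lemma EE_univ_mem {a : Fin G.n × Fin G.n} :
    a ∈ G.EE univ ↔ (G.adj a.1 a.2 = true ∧ a.1 < a.2) := by
  simp [EE]

lemma EE_split (H : Finset (Fin G.n)) (S : Finset (Fin G.n)) : (G.EE S).card =
    ((G.HEs H).filter (fun a => a.1 ∈ S ∧ a.2 ∈ S)).card +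
    ((G.SEs H).filter (fun a => a.1 ∈ S ∧ a.2 ∈ S)).card := by
  classical
  have hEF : G.EE S = (G.EE univ).filter (fun a => a.1 ∈ S ∧ a.2 ∈ S) := by
    unfold EE
    rw [Finset.filter_filter]
    apply Finset.filter_congr
    intro a _
    simp only [mem_univ, true_and]
    tauto
  rw [hEF]
  have h := Finset.card_filter_add_card_filter_not
    (s := (G.EE univ).filter (fun a => a.1 ∈ S ∧ a.2 ∈ S))
    (p := fun a => a.1 ∈ H ∨ a.2 ∈ H)
  rw [← h]
  congr 1
  · unfold HEs
    rw [Finset.filter_filter, Finset.filter_filter]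
    congr 1
    apply Finset.filter_congr
    intro a _
    tauto
  · unfold SEs
    rw [Finset.filter_filter, Finset.filter_filter]
    congr 1
    apply Finset.filter_congr
    intro a _
    tauto

lemma card_filter_pairs_boole (F : Finset (Fin G.n × Fin G.n)) (S : Finset (Fin G.n)) :
    (((F.filter (fun a => a.1 ∈ S ∧ a.2 ∈ S)).card : ℝ)) =
      ∑ a ∈ F, (if a.1 ∈ S ∧ a.2 ∈ S then (1:ℝ) else 0) := by
  rw [Finset.sum_boole]

lemma Ew_edgecount {p : ℝ} (hp : 0 ≤ p) (F : Finset (Fin G.n × Fin G.n))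
    (hF : F ⊆ G.EE univ) :
    G.Ew p (fun S => (((F.filter (fun a => a.1 ∈ S ∧ a.2 ∈ S)).card : ℝ))) =
      (min p 1)^2 * (F.card : ℝ) := by
  rw [G.Ew_congr (fun S => G.card_filter_pairs_boole F S), G.Ew_sum]
  have : ∀ a ∈ F, G.Ew p (fun S => if a.1 ∈ S ∧ a.2 ∈ S then (1:ℝ) else 0) = (min p 1)^2 := by
    intro a ha
    exact G.Ew_pair hp a (ne_of_lt ((G.EE_univ_mem).1 (hF ha)).2)
  rw [Finset.sum_congr rfl this, Finset.sum_const, nsmul_eq_mul]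
  ring

def sortp (u v : Fin G.n) : Fin G.n × Fin G.n := if u < v then (u, v) else (v, u)

lemma sharePairs_card_le (H : Finset (Fin G.n)) (F₁ F₂ : Finset (Fin G.n × Fin G.n))
    (h₁ : F₁ ⊆ G.SEs H) (h₂ : F₂ ⊆ G.EE univ) :
    (((F₁ ×ˢ F₂).filter (fun ab => ab.1 ≠ ab.2 ∧ G.share ab.1 ab.2)).card) ≤
      (G.T3s H).card := by
  apply Finset.card_le_card_of_surjOn (fun t => (G.sortp t.1 t.2.1, G.sortp t.1 t.2.2))
  rintro ⟨⟨a1, a2⟩, b1, b2⟩ hab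
  simp only [coe_filter, Set.mem_setOf_eq, Finset.mem_product] at hab
  obtain ⟨⟨haF, hbF⟩, hne, hsh⟩ := hab
  have haS := h₁ haF
  simp only [SEs, mem_filter] at haS
  obtain ⟨haE, ha1H, ha2H⟩ := haS
  have haE' := (G.EE_univ_mem).1 haE
  obtain ⟨hadja, hlta⟩ := haE'
  have hbE' := (G.EE_univ_mem).1 (h₂ hbF)
  obtain ⟨hadjb, hltb⟩ := hbE'
  simp only at hadja hlta hadjb hltb ha1H ha2H
  have hsortA : G.sortp a1 a2 = (a1, a2) := if_pos hlta
  have hsortB : G.sortp b1 b2 = (b1, b2) := if_pos hltb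
  simp only [share] at hsh
  rcases hsh with h | h | h | h
  · subst h
    refine ⟨(a1, a2, b2), ?_, ?_⟩
    · simp only [mem_coe, T3s, mem_filter, mem_univ, true_and]
      exact ⟨ha1H, hadja, hadjb, (ne_of_lt hlta).symm, (ne_of_lt hltb).symm⟩
    · simp only
      rw [hsortA]
      have : G.sortp a1 b2 = (a1, b2) := if_pos hltb
      rw [this]
  · subst h
    refine ⟨(a1, a2, b1), ?_, ?_⟩
    · simp only [mem_coe, T3s, mem_filter, mem_univ, true_and]
      refine ⟨ha1H, hadja, ?_, (ne_of_lt hlta).symm, ne_of_lt hltb⟩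
      rw [G.symm]; exact hadjb
    · simp only
      rw [hsortA]
      have : G.sortp a1 b1 = (b1, a1) := if_neg (asymm hltb)
      rw [this]
  · subst h
    refine ⟨(a2, a1, b2), ?_, ?_⟩
    · simp only [mem_coe, T3s, mem_filter, mem_univ, true_and]
      refine ⟨ha2H, ?_, hadjb, ne_of_lt hlta, (ne_of_lt hltb).symm⟩
      rw [G.symm]; exact hadja
    · simp only
      have h1 : G.sortp a2 a1 = (a1, a2) := if_neg (asymm hlta)
      have h2 : G.sortp a2 b2 = (a2, b2) := if_pos hltb
      rw [h1, h2]
  · subst h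
    refine ⟨(a2, a1, b1), ?_, ?_⟩
    · simp only [mem_coe, T3s, mem_filter, mem_univ, true_and]
      refine ⟨ha2H, ?_, ?_, ne_of_lt hlta, ne_of_lt hltb⟩
      · rw [G.symm]; exact hadja
      · rw [G.symm]; exact hadjb
    · simp only
      have h1 : G.sortp a2 a1 = (a1, a2) := if_neg (asymm hlta)
      have h2 : G.sortp a2 b1 = (b1, a2) := if_neg (asymm hltb)
      rw [h1, h2]

lemma T3s_card (H : Finset (Fin G.n)) :
    (G.T3s H).card = ∑ i ∈ univ.filter (fun i => i ∉ H), (G.deg i)^2 := by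
  classical
  rw [Finset.card_eq_sum_card_fiberwise (f := fun t => t.1) (t := univ) (fun x _ => mem_univ _)]
  rw [Finset.sum_filter]
  apply Finset.sum_congr rfl
  intro w _
  by_cases hw : w ∈ H
  · rw [if_neg (by simpa using hw)]
    rw [Finset.card_eq_zero, Finset.filter_eq_empty_iff]
    intro t ht
    simp only [T3s, mem_filter, mem_univ, true_and] at ht
    intro heq
    exact ht.1 (heq ▸ hw)
  · rw [if_pos hw]
    have hbij : ((G.T3s H).filter (fun t => t.1 = w)).card =
        ((univ.filter (fun j => G.adj w j = true ∧ j ≠ w)) ×ˢ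
         (univ.filter (fun j => G.adj w j = true ∧ j ≠ w))).card := by
      apply Finset.card_nbij (fun t => t.2)
      · intro t ht
        simp only [mem_coe, T3s, mem_filter, mem_univ, true_and] at ht
        obtain ⟨⟨h1, h2, h3, h4, h5⟩, h6⟩ := ht
        subst h6
        simp only [mem_coe, Finset.mem_product, mem_filter, mem_univ, true_and]
        exact ⟨⟨h2, h4⟩, ⟨h3, h5⟩⟩
      · intro t ht s hs h
        simp only [coe_filter, Set.mem_setOf_eq] at ht hs
        exact Prod.ext (ht.2.trans hs.2.symm) h
      · rintro ⟨x, y⟩ hxy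
        simp only [coe_product, Set.mem_prod, mem_coe, mem_filter, mem_univ, true_and] at hxy
        refine ⟨(w, x, y), ?_, rfl⟩
        simp only [coe_filter, Set.mem_setOf_eq, T3s, mem_filter, mem_univ, true_and]
        exact ⟨⟨hw, hxy.1.1, hxy.2.1, hxy.1.2, hxy.2.2⟩, trivial⟩
    rw [hbij, Finset.card_product]
    rw [deg, sq]

lemma HEs_card_le (H : Finset (Fin G.n)) : (G.HEs H).card ≤ 2 * ∑ i ∈ H, G.deg i := by
  classical
  set A := (univ : Finset (Fin G.n × Fin G.n)).filter
    (fun a => G.adj a.1 a.2 = true ∧ a.1 ≠ a.2 ∧ a.1 ∈ H) with hA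
  set B := (univ : Finset (Fin G.n × Fin G.n)).filter
    (fun a => G.adj a.1 a.2 = true ∧ a.1 ≠ a.2 ∧ a.2 ∈ H) with hB
  have hsub : G.HEs H ⊆ A ∪ B := by
    intro a ha
    simp only [HEs, mem_filter] at ha
    obtain ⟨haE, hor⟩ := ha
    obtain ⟨hadj, hlt⟩ := (G.EE_univ_mem).1 haE
    rcases hor with h | h
    · apply Finset.mem_union_left
      rw [hA, mem_filter]
      exact ⟨mem_univ _, hadj, ne_of_lt hlt, h⟩
    · apply Finset.mem_union_right
      rw [hB, mem_filter]
      exact ⟨mem_univ _, hadj, ne_of_lt hlt, h⟩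
  have hcardA : A.card = ∑ i ∈ H, G.deg i := by
    rw [Finset.card_eq_sum_card_fiberwise (f := fun a => a.1) (t := H)
      (fun x hx => by simp only [mem_coe, hA, mem_filter] at hx; exact hx.2.2.2)]
    apply Finset.sum_congr rfl
    intro i hi
    apply Finset.card_nbij (fun a => a.2)
    · intro a ha
      simp only [mem_coe, hA, mem_filter, mem_univ, true_and] at ha
      obtain ⟨⟨h1, h2, h3⟩, h4⟩ := ha
      subst h4
      simp only [mem_coe, deg, mem_filter, mem_univ, true_and]
      exact ⟨h1, fun hh => h2 hh.symm⟩
    · intro a ha b hb h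
      simp only [coe_filter, Set.mem_setOf_eq] at ha hb
      exact Prod.ext (ha.2.trans hb.2.symm) h
    · intro j hj
      simp only [deg, coe_filter, Set.mem_setOf_eq, mem_coe, mem_filter, mem_univ,
        true_and] at hj
      refine ⟨(i, j), ?_, rfl⟩
      simp only [coe_filter, Set.mem_setOf_eq, hA, mem_filter, mem_univ, true_and]
      exact ⟨⟨hj.1, fun hh => hj.2 hh.symm, hi⟩, trivial⟩
  have hcardB : B.card = ∑ i ∈ H, G.deg i := by
    rw [Finset.card_eq_sum_card_fiberwise (f := fun a => a.2) (t := H)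
      (fun x hx => by simp only [mem_coe, hB, mem_filter] at hx; exact hx.2.2.2)]
    apply Finset.sum_congr rfl
    intro i hi
    apply Finset.card_nbij (fun a => a.1)
    · intro a ha
      simp only [mem_coe, hB, mem_filter, mem_univ, true_and] at ha
      obtain ⟨⟨h1, h2, h3⟩, h4⟩ := ha
      subst h4
      simp only [mem_coe, deg, mem_filter, mem_univ, true_and]
      refine ⟨by rw [G.symm]; exact h1, h2⟩
    · intro a ha b hb h
      simp only [coe_filter, Set.mem_setOf_eq] at ha hb
      exact Prod.ext h (ha.2.trans hb.2.symm)
    · intro j hj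
      simp only [deg, coe_filter, Set.mem_setOf_eq, mem_coe, mem_filter, mem_univ,
        true_and] at hj
      refine ⟨(j, i), ?_, rfl⟩
      simp only [coe_filter, Set.mem_setOf_eq, hB, mem_filter, mem_univ, true_and]
      exact ⟨⟨by rw [G.symm]; exact hj.1, hj.2, hi⟩, trivial⟩
  calc (G.HEs H).card ≤ (A ∪ B).card := Finset.card_le_card hsub
    _ ≤ A.card + B.card := Finset.card_union_le _ _
    _ = 2 * ∑ i ∈ H, G.deg i := by rw [hcardA, hcardB]; ring

lemma Ew_prod_le {p : ℝ} (hp : 0 ≤ p) (H : Finset (Fin G.n))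
    (F₁ F₂ : Finset (Fin G.n × Fin G.n)) (h₁ : F₁ ⊆ G.SEs H) (h₂ : F₂ ⊆ G.EE univ) :
    G.Ew p (fun S => (((F₁.filter (fun a => a.1 ∈ S ∧ a.2 ∈ S)).card : ℝ)) *
        (((F₂.filter (fun a => a.1 ∈ S ∧ a.2 ∈ S)).card : ℝ))) ≤
      (min p 1)^2 * (F₁.card : ℝ) + (min p 1)^3 * ((G.T3s H).card : ℝ) +
        (min p 1)^4 * ((F₁.card : ℝ) * (F₂.card : ℝ)) := by
  classical
  set q := min p 1 with hqdef
  have hq0 : (0:ℝ) ≤ q := le_min hp zero_le_one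
  have hq1 : q ≤ 1 := min_le_right _ _
  have hrep : ∀ S : Finset (Fin G.n),
      (((F₁.filter (fun a => a.1 ∈ S ∧ a.2 ∈ S)).card : ℝ)) *
        (((F₂.filter (fun a => a.1 ∈ S ∧ a.2 ∈ S)).card : ℝ)) =
      ∑ c ∈ F₁ ×ˢ F₂, (if c.1.1 ∈ S ∧ c.1.2 ∈ S ∧ c.2.1 ∈ S ∧ c.2.2 ∈ S then (1:ℝ) else 0) := by
    intro S
    rw [G.card_filter_pairs_boole, G.card_filter_pairs_boole, Finset.sum_mul_sum,
      Finset.sum_product]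
    apply Finset.sum_congr rfl
    intro a _
    apply Finset.sum_congr rfl
    intro b _
    by_cases h1 : a.1 ∈ S ∧ a.2 ∈ S <;> by_cases h2 : b.1 ∈ S ∧ b.2 ∈ S <;>
      simp only [if_pos, if_neg, h1, h2, and_true, and_false, true_and, false_and, mul_one,
        mul_zero, one_mul, zero_mul, if_true, if_false] <;> simp [h1, h2] <;> tauto
  rw [G.Ew_congr hrep, G.Ew_sum]
  have hterm : ∀ c ∈ F₁ ×ˢ F₂,
      G.Ew p (fun S => if c.1.1 ∈ S ∧ c.1.2 ∈ S ∧ c.2.1 ∈ S ∧ c.2.2 ∈ S then (1:ℝ) else 0) ≤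
      (if c.1 = c.2 then q^2 else 0) + (if c.1 ≠ c.2 ∧ G.share c.1 c.2 then q^3 else 0) +
        q^4 := by
    intro c hc
    rw [G.Ew_quad hp c.1 c.2]
    rw [Finset.mem_product] at hc
    have hlta : c.1.1 < c.1.2 := ((G.EE_univ_mem).1 (Finset.filter_subset _ _ (h₁ hc.1))).2
    have hltb : c.2.1 < c.2.2 := ((G.EE_univ_mem).1 (h₂ hc.2)).2
    by_cases heq : c.1 = c.2
    · rw [if_pos heq, if_neg (fun h => h.1 heq)]
      have h2 := G.two_le_cardU (a := c.1) (b := c.2) (ne_of_lt hlta)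
      have := pow_le_pow_of_le_one hq0 hq1 h2
      have h4 : (0:ℝ) ≤ q^4 := pow_nonneg hq0 _
      linarith
    · rw [if_neg heq]
      by_cases hsh : G.share c.1 c.2
      · rw [if_pos ⟨heq, hsh⟩]
        have h3 := G.three_le_cardU hlta hltb heq
        have := pow_le_pow_of_le_one hq0 hq1 h3
        have h4 : (0:ℝ) ≤ q^4 := pow_nonneg hq0 _
        linarith
      · rw [if_neg (fun h => hsh h.2)]
        have h4 := G.four_le_cardU hlta hltb hsh
        have := pow_le_pow_of_le_one hq0 hq1 h4
        have h2 : (0:ℝ) ≤ q^2 := pow_nonneg hq0 _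
        linarith
  calc ∑ c ∈ F₁ ×ˢ F₂,
        G.Ew p (fun S => if c.1.1 ∈ S ∧ c.1.2 ∈ S ∧ c.2.1 ∈ S ∧ c.2.2 ∈ S then (1:ℝ) else 0)
      ≤ ∑ c ∈ F₁ ×ˢ F₂, ((if c.1 = c.2 then q^2 else 0) +
          (if c.1 ≠ c.2 ∧ G.share c.1 c.2 then q^3 else 0) + q^4) :=
        Finset.sum_le_sum hterm
    _ = q^2 * (((F₁ ×ˢ F₂).filter (fun c => c.1 = c.2)).card : ℝ) +
        q^3 * (((F₁ ×ˢ F₂).filter (fun c => c.1 ≠ c.2 ∧ G.share c.1 c.2)).card : ℝ) +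
        q^4 * ((F₁ ×ˢ F₂).card : ℝ) := by
        rw [Finset.sum_add_distrib, Finset.sum_add_distrib, Finset.sum_const, nsmul_eq_mul]
        congr 1
        · congr 1
          · rw [← Finset.sum_filter, Finset.sum_const, nsmul_eq_mul]; ring
          · rw [← Finset.sum_filter, Finset.sum_const, nsmul_eq_mul]; ring
        · ring
    _ ≤ q^2 * (F₁.card : ℝ) + q^3 * ((G.T3s H).card : ℝ) +
        q^4 * ((F₁.card : ℝ) * (F₂.card : ℝ)) := by
        have hd : (((F₁ ×ˢ F₂).filter (fun c => c.1 = c.2)).card) ≤ F₁.card := by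
          apply Finset.card_le_card_of_injOn (fun c => c.1)
          · intro c hc
            simp only [mem_coe, mem_filter, Finset.mem_product] at hc
            exact hc.1.1
          · intro c hc d hd h
            simp only [coe_filter, Set.mem_setOf_eq] at hc hd
            exact Prod.ext h (hc.2 ▸ hd.2 ▸ h)
        have hs := G.sharePairs_card_le H F₁ F₂ h₁ h₂
        have hc : ((F₁ ×ˢ F₂).card : ℝ) = (F₁.card : ℝ) * (F₂.card : ℝ) := by
          rw [Finset.card_product]; push_cast; ring
        rw [hc]
        have t1 : q^2 * (((F₁ ×ˢ F₂).filter (fun c => c.1 = c.2)).card : ℝ) ≤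
            q^2 * (F₁.card : ℝ) :=
          mul_le_mul_of_nonneg_left (by exact_mod_cast hd) (pow_nonneg hq0 _)
        have t2 : q^3 * (((F₁ ×ˢ F₂).filter (fun c => c.1 ≠ c.2 ∧ G.share c.1 c.2)).card : ℝ) ≤
            q^3 * ((G.T3s H).card : ℝ) :=
          mul_le_mul_of_nonneg_left (by exact_mod_cast hs) (pow_nonneg hq0 _)
        linarith

end FinGraph

/-- The key upper bound on the tail expectation. -/
lemma upperBound (G : FinGraph) {p M : ℝ} (hp : 0 ≤ p) (hM : 0 < M) (H : Finset (Fin G.n)) :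
    expEdgeTail G p M ≤ (min p 1)^2 * ((G.HEs H).card : ℝ)
      + (2 * ((min p 1)^2 * ((G.SEs H).card : ℝ)) + 2 * ((min p 1)^3 * ((G.T3s H).card : ℝ))
         + (min p 1)^4 * (((G.SEs H).card : ℝ)^2 +
            ((G.SEs H).card : ℝ) * ((G.HEs H).card : ℝ))) / M := by
  classical
  set q := min p 1 with hqdef
  set Y : Finset (Fin G.n) → ℝ :=
    fun S => (((G.SEs H).filter (fun a => a.1 ∈ S ∧ a.2 ∈ S)).card : ℝ) with hY
  set Z : Finset (Fin G.n) → ℝ :=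
    fun S => (((G.HEs H).filter (fun a => a.1 ∈ S ∧ a.2 ∈ S)).card : ℝ) with hZ
  have step1 : expEdgeTail G p M ≤ G.Ew p (fun S => Z S + (Y S * Y S + Y S * Z S) / M) := by
    rw [expEdgeTail_eq]
    apply G.Ew_mono hp
    intro S
    rw [G.induce_e S]
    have hXsplit : ((G.EE S).card : ℝ) = Z S + Y S := by
      rw [hY, hZ]
      have := G.EE_split H S
      push_cast [this]
      ring
    have hY0 : 0 ≤ Y S := Nat.cast_nonneg _
    have hZ0 : 0 ≤ Z S := Nat.cast_nonneg _
    by_cases hMX : M < ((G.EE S).card : ℝ)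
    · rw [if_pos hMX]
      rw [hXsplit] at hMX ⊢
      have h1 : Y S * M ≤ Y S * (Y S + Z S) := by nlinarith
      have h2 : Y S ≤ (Y S * Y S + Y S * Z S) / M := by
        rw [le_div_iff₀ hM]
        nlinarith
      linarith
    · rw [if_neg hMX]
      have : 0 ≤ (Y S * Y S + Y S * Z S) / M :=
        div_nonneg (by nlinarith) (le_of_lt hM)
      linarith
  have step2 : G.Ew p (fun S => Z S + (Y S * Y S + Y S * Z S) / M) =
      G.Ew p Z + (G.Ew p (fun S => Y S * Y S) + G.Ew p (fun S => Y S * Z S)) / M := by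
    rw [G.Ew_add]
    congr 1
    have : ∀ S : Finset (Fin G.n), (Y S * Y S + Y S * Z S) / M =
        (1/M) * (Y S * Y S + Y S * Z S) := fun S => by ring
    rw [G.Ew_congr this, G.Ew_smul, G.Ew_add]
    ring
  have hZval : G.Ew p Z = q^2 * ((G.HEs H).card : ℝ) :=
    G.Ew_edgecount hp (G.HEs H) (Finset.filter_subset _ _)
  have hYY : G.Ew p (fun S => Y S * Y S) ≤
      q^2 * ((G.SEs H).card : ℝ) + q^3 * ((G.T3s H).card : ℝ) +
        q^4 * (((G.SEs H).card : ℝ) * ((G.SEs H).card : ℝ)) :=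
    G.Ew_prod_le hp H (G.SEs H) (G.SEs H) (le_refl _) (Finset.filter_subset _ _)
  have hYZ : G.Ew p (fun S => Y S * Z S) ≤
      q^2 * ((G.SEs H).card : ℝ) + q^3 * ((G.T3s H).card : ℝ) +
        q^4 * (((G.SEs H).card : ℝ) * ((G.HEs H).card : ℝ)) :=
    G.Ew_prod_le hp H (G.SEs H) (G.HEs H) (le_refl _) (Finset.filter_subset _ _)
  have hdiv : (G.Ew p (fun S => Y S * Y S) + G.Ew p (fun S => Y S * Z S)) / M ≤
      (2 * (q^2 * ((G.SEs H).card : ℝ)) + 2 * (q^3 * ((G.T3s H).card : ℝ))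
         + q^4 * (((G.SEs H).card : ℝ)^2 +
            ((G.SEs H).card : ℝ) * ((G.HEs H).card : ℝ))) / M := by
    have hriff : ∀ a b : ℝ, a ≤ b → a / M ≤ b / M := fun a b hab => by gcongr
    apply hriff
    have hsq : ((G.SEs H).card : ℝ)^2 = ((G.SEs H).card : ℝ) * ((G.SEs H).card : ℝ) := sq _
    linarith [hYY, hYZ]
  calc expEdgeTail G p M ≤ G.Ew p (fun S => Z S + (Y S * Y S + Y S * Z S) / M) := step1
    _ = G.Ew p Z + (G.Ew p (fun S => Y S * Y S) + G.Ew p (fun S => Y S * Z S)) / M := step2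
    _ ≤ _ := by rw [hZval]; linarith [hdiv]

end UpperBound

set_option maxHeartbeats 1000000

lemma tailDegSum_eq (G : FinGraph) (k : ℝ) :
    tailDegSum G k =
      ∑ i ∈ univ.filter (fun i => k * Real.sqrt (G.e : ℝ) < (G.deg i : ℝ)), (G.deg i : ℝ) :=
  (Finset.sum_filter _ _).symm

/-- For a sequence of finite graphs with `e(G_j) → ∞`, `r > 0` and
`p_j = r/√(2e(G_j))`, the family of edge counts `e(S_{p_j}(G_j))` of the `p_j`-sampled
subgraphs is uniformly integrable iff the sequence is uniformly sampling regular. -/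
theorem stmt4 (G : ℕ → FinGraph) (r : ℝ) (hr : 0 < r)
    (he : Tendsto (fun j => ((G j).e : ℝ)) atTop atTop) :
    (∀ ε : ℝ, 0 < ε → ∃ M : ℝ, ∀ j,
        expEdgeTail (G j) (r / Real.sqrt (2 * ((G j).e : ℝ))) M ≤ ε) ↔
      UniformlySamplingRegular G := by
  have hs2pos : (0:ℝ) < Real.sqrt 2 := Real.sqrt_pos.2 (by norm_num)
  have hs2le : Real.sqrt 2 ≤ 2 := by
    nlinarith [Real.sq_sqrt (by norm_num : (0:ℝ) ≤ 2), Real.sqrt_nonneg 2]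
  have hs21 : (1:ℝ) ≤ Real.sqrt 2 := by
    nlinarith [Real.sq_sqrt (by norm_num : (0:ℝ) ≤ 2), Real.sqrt_nonneg 2]
  have hr2 : (0:ℝ) < r^2 := pow_pos hr 2
  constructor
  · -- uniform integrability implies uniform sampling regularity
    intro hui ε hε
    obtain ⟨M, hM⟩ := hui (ε * r^2 / 16) (by positivity)
    set M' : ℝ := max M 1 with hM'def
    have hM'1 : (1:ℝ) ≤ M' := le_max_right _ _
    have hM'0 : (0:ℝ) < M' := lt_of_lt_of_le one_pos hM'1
    clear_value M'
    have htail : ∀ j, expEdgeTail (G j) (r / Real.sqrt (2 * ((G j).e : ℝ))) M' ≤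
        ε * r^2 / 16 := by
      intro j
      have hp : 0 ≤ r / Real.sqrt (2 * ((G j).e : ℝ)) :=
        div_nonneg (le_of_lt hr) (Real.sqrt_nonneg _)
      exact le_trans (expEdgeTail_mono _ hp (by rw [hM'def]; exact le_max_left M 1)) (hM j)
    have hk0' : 0 < r^2 + 4 * M' / r + 1 := by
      have h1 : 0 < 4 * M' / r := div_pos (by linarith) hr
      linarith
    refine ⟨r^2 + 4 * M' / r + 1, hk0', fun j => ?_⟩
    have htailj := htail j
    set k : ℝ := r^2 + 4 * M' / r + 1 with hkdef
    have hk0 : 0 < k := hk0'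
    clear_value k
    set e : ℝ := ((G j).e : ℝ) with hedef
    have he0 : 0 ≤ e := Nat.cast_nonneg _
    clear_value e
    by_cases hez : e = 0
    · rw [hez]
      simp only [one_div, inv_zero, zero_mul]
      exact hε
    by_cases hsmall : 2 * e ≤ r^2
    · have he1 : (1:ℝ) ≤ e := by
        have h1 : (G j).e ≠ 0 := by
          intro h
          exact hez (by rw [hedef, h, Nat.cast_zero])
        have h2 : 1 ≤ (G j).e := Nat.one_le_iff_ne_zero.2 h1
        rw [hedef]
        exact_mod_cast h2
      have hse1 : (1:ℝ) ≤ Real.sqrt e := by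
        rw [show (1:ℝ) = Real.sqrt 1 by simp]
        exact Real.sqrt_le_sqrt he1
      have hT : tailDegSum (G j) k = 0 := by
        unfold tailDegSum
        apply Finset.sum_eq_zero
        intro i _
        rw [if_neg]
        apply not_lt.2
        rw [← hedef]
        have hd : ((G j).deg i : ℝ) ≤ e := by
          rw [hedef]
          exact_mod_cast (G j).deg_le_e i
        have hM'pos : 0 < 4 * M' / r := div_pos (by linarith) hr
        have hke : k * 1 ≤ k * Real.sqrt e :=
          mul_le_mul_of_nonneg_left hse1 hk0.le
        have hkval : k = r^2 + 4 * M' / r + 1 := hkdef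
        linarith
      rw [hT, mul_zero]
      exact hε
    · push_neg at hsmall
      have he1 : 0 < e := by linarith
      have h2e : (0:ℝ) < 2 * e := by linarith
      have hs2e : 0 < Real.sqrt (2 * e) := Real.sqrt_pos.2 h2e
      have hsepos : 0 < Real.sqrt e := Real.sqrt_pos.2 he1
      set p : ℝ := r / Real.sqrt (2 * e) with hpdef
      have hp0 : 0 < p := div_pos hr hs2e
      clear_value p
      have hp1 : p < 1 := by
        rw [hpdef, div_lt_one hs2e]
        calc r = Real.sqrt (r^2) := (Real.sqrt_sq hr.le).symm
          _ < Real.sqrt (2 * e) := Real.sqrt_lt_sqrt (sq_nonneg r) hsmall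
      have hq : min p 1 = p := min_eq_left hp1.le
      have hpsq : p^2 = r^2 / (2 * e) := by
        rw [hpdef, div_pow, Real.sq_sqrt h2e.le]
      have hsplit2 : Real.sqrt (2 * e) = Real.sqrt 2 * Real.sqrt e :=
        Real.sqrt_mul (by norm_num) e
      set H : Finset (Fin (G j).n) :=
        univ.filter (fun i => k * Real.sqrt e < ((G j).deg i : ℝ)) with hHdef
      clear_value H
      have hlb := lowerBound (G j) hp0.le hM'1 H
      rw [hq] at hlb
      have hper : ∀ i ∈ H, p^2 / 2 * ((G j).deg i : ℝ) ≤
          p^2 * ((G j).deg i : ℝ) - M' * p := by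
        intro i hi
        rw [hHdef, mem_filter] at hi
        have hdi := hi.2
        have hd0 : (0:ℝ) ≤ ((G j).deg i : ℝ) := Nat.cast_nonneg _
        have hpk : p * (k * Real.sqrt e) = r * k / Real.sqrt 2 := by
          rw [hpdef, hsplit2]
          field_simp
        have hrk : r * k = r^3 + 4 * M' + r := by
          rw [hkdef]
          field_simp
        have hrk2 : 2 * M' ≤ r * k / 2 := by
          rw [hrk]
          have := pow_pos hr 3
          linarith
        have hdiv : r * k / 2 ≤ r * k / Real.sqrt 2 := by
          rw [div_le_div_iff₀ (by norm_num) hs2pos]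
          have hrk0 : 0 ≤ r * k := mul_nonneg hr.le hk0.le
          have := mul_le_mul_of_nonneg_left hs2le hrk0
          linarith
        have h1 : p * (k * Real.sqrt e) ≤ p * ((G j).deg i : ℝ) :=
          mul_le_mul_of_nonneg_left hdi.le hp0.le
        have h2M : 2 * M' ≤ p * ((G j).deg i : ℝ) := by
          rw [hpk] at h1
          linarith
        have h3 := mul_le_mul_of_nonneg_left h2M hp0.le
        have h4 : p * (p * ((G j).deg i : ℝ)) = p^2 * ((G j).deg i : ℝ) := by ring
        rw [h4] at h3
        linarith
      have hsum : ∑ i ∈ H, (p^2/2 * ((G j).deg i : ℝ)) ≤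
          ∑ i ∈ H, (p^2 * ((G j).deg i : ℝ) - M' * p) := Finset.sum_le_sum hper
      have hTds : tailDegSum (G j) k = ∑ i ∈ H, ((G j).deg i : ℝ) := by
        rw [tailDegSum_eq, hHdef, ← hedef]
      have hTval : p^2/4 * tailDegSum (G j) k ≤ ε * r^2 / 16 := by
        have e1 : p^2/4 * tailDegSum (G j) k =
            (1/2) * ∑ i ∈ H, (p^2/2 * ((G j).deg i : ℝ)) := by
          rw [hTds, Finset.mul_sum, Finset.mul_sum]
          apply Finset.sum_congr rfl
          intro i _
          ring
        rw [e1]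
        calc (1/2) * ∑ i ∈ H, (p^2/2 * ((G j).deg i : ℝ))
            ≤ (1/2) * ∑ i ∈ H, (p^2 * ((G j).deg i : ℝ) - M' * p) :=
              mul_le_mul_of_nonneg_left hsum (by norm_num)
          _ ≤ expEdgeTail (G j) p M' := hlb
          _ ≤ ε * r^2 / 16 := htailj
      rw [hpsq] at hTval
      have hgoal : 1/e * tailDegSum (G j) k ≤ ε / 2 := by
        have e2 : r^2 / (2*e) / 4 * tailDegSum (G j) k =
            r^2/8 * (1/e * tailDegSum (G j) k) := by
          field_simp [he1.ne']
          try ring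
          try exact Or.inl trivial
        rw [e2] at hTval
        have h5 : r^2/8 * (1/e * tailDegSum (G j) k) ≤ r^2/8 * (ε/2) := by
          rw [show r^2/8 * (ε/2) = ε * r^2/16 by ring]
          exact hTval
        exact le_of_mul_le_mul_left h5 (div_pos hr2 (by norm_num))
      calc 1/e * tailDegSum (G j) k ≤ ε / 2 := hgoal
        _ < ε := by linarith
  · -- uniform sampling regularity implies uniform integrability
    intro husr ε hε
    set ε₀ : ℝ := ε / (2 * (r^2 + 1)) with hε₀def
    have hε₀ : 0 < ε₀ := div_pos hε (by positivity)
    clear_value ε₀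
    obtain ⟨k, hk0, hkb⟩ := husr ε₀ hε₀
    set C : ℝ := r^2 + 2 * k * r^3 + r^4/4 + ε₀ * r^4/2 + 1 with hCdef
    clear_value C
    have hC0 : 0 < C := by
      rw [hCdef]
      have h1 : 0 ≤ 2 * k * r^3 := mul_nonneg (by linarith) (pow_nonneg hr.le 3)
      have h2 : 0 ≤ ε₀ * r^4/2 :=
        div_nonneg (mul_nonneg hε₀.le (pow_nonneg hr.le 4)) (by norm_num)
      have h3 : 0 ≤ r^4/4 := div_nonneg (pow_nonneg hr.le 4) (by norm_num)
      have h4 : (0:ℝ) ≤ r^2 := sq_nonneg r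
      linarith
    refine ⟨max (r^2 + 1) (4 * C / ε), fun j => ?_⟩
    set M : ℝ := max (r^2 + 1) (4 * C / ε) with hMdef
    have hM1 : r^2 + 1 ≤ M := le_max_left _ _
    have hM2 : 4 * C / ε ≤ M := le_max_right _ _
    have hM0 : (0:ℝ) < M := lt_of_lt_of_le (by positivity) hM1
    clear_value M
    set e : ℝ := ((G j).e : ℝ) with hedef
    have he0 : 0 ≤ e := Nat.cast_nonneg _
    clear_value e
    set p : ℝ := r / Real.sqrt (2 * e) with hpdef
    have hp0 : 0 ≤ p := div_nonneg hr.le (Real.sqrt_nonneg _)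
    clear_value p
    by_cases hsmall : 2 * e ≤ r^2
    · -- the graph is tiny: the tail vanishes
      have hzero : expEdgeTail (G j) p M = 0 := by
        unfold expEdgeTail
        apply Finset.sum_eq_zero
        intro S _
        have hXle : (((G j).induce S).e : ℝ) ≤ e := by
          rw [hedef]
          have h1 : ((G j).induce S).e ≤ (G j).e := by
            rw [(G j).induce_e S]
            exact (G j).EE_card_le S
          exact_mod_cast h1
        have hnot : ¬ M < (((G j).induce S).e : ℝ) := by
          apply not_lt.2
          have h4 : (0:ℝ) ≤ r^2 := sq_nonneg r
          linarith
        rw [if_neg hnot, mul_zero]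
      rw [hzero]
      exact hε.le
    · push_neg at hsmall
      have he1 : 0 < e := by linarith
      have h2e : (0:ℝ) < 2 * e := by linarith
      have hs2e : 0 < Real.sqrt (2 * e) := Real.sqrt_pos.2 h2e
      have hsepos : 0 < Real.sqrt e := Real.sqrt_pos.2 he1
      have hp0' : 0 < p := by rw [hpdef]; exact div_pos hr hs2e
      have hp1 : p < 1 := by
        rw [hpdef, div_lt_one hs2e]
        calc r = Real.sqrt (r^2) := (Real.sqrt_sq hr.le).symm
          _ < Real.sqrt (2 * e) := Real.sqrt_lt_sqrt (sq_nonneg r) hsmall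
      have hq : min p 1 = p := min_eq_left hp1.le
      have hpsq : p^2 = r^2 / (2 * e) := by
        rw [hpdef, div_pow, Real.sq_sqrt h2e.le]
      have hsplit2 : Real.sqrt (2 * e) = Real.sqrt 2 * Real.sqrt e :=
        Real.sqrt_mul (by norm_num) e
      set H : Finset (Fin (G j).n) :=
        univ.filter (fun i => k * Real.sqrt e < ((G j).deg i : ℝ)) with hHdef
      clear_value H
      have hkbj := hkb j
      rw [← hedef] at hkbj
      have hTds : tailDegSum (G j) k = ∑ i ∈ H, ((G j).deg i : ℝ) := by
        rw [tailDegSum_eq, hHdef, ← hedef]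
      have hTle : ∑ i ∈ H, ((G j).deg i : ℝ) < ε₀ * e := by
        rw [← hTds]
        have h1 := mul_lt_mul_of_pos_left hkbj he1
        have h2 : e * (1/e * tailDegSum (G j) k) = tailDegSum (G j) k := by
          field_simp
        rw [h2] at h1
        linarith
      have hT0 : 0 ≤ ∑ i ∈ H, ((G j).deg i : ℝ) :=
        Finset.sum_nonneg fun i _ => Nat.cast_nonneg _
      have hsum2e : ∑ i : Fin (G j).n, ((G j).deg i : ℝ) = 2 * e := by
        have h1 := (G j).sum_deg
        have h2 := congrArg (fun m : ℕ => (m : ℝ)) h1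
        push_cast at h2
        rw [hedef]
        exact h2
      have hHE : (((G j).HEs H).card : ℝ) ≤ 2 * ∑ i ∈ H, ((G j).deg i : ℝ) := by
        have h1 := (G j).HEs_card_le H
        have h2 : ((((G j).HEs H).card : ℕ) : ℝ) ≤ ((2 * ∑ i ∈ H, (G j).deg i : ℕ) : ℝ) := by
          exact_mod_cast h1
        push_cast at h2
        exact h2
      have hSE : (((G j).SEs H).card : ℝ) ≤ e := by
        rw [hedef]
        have h1 : ((G j).SEs H).card ≤ (G j).e := by
          rw [← (G j).EE_univ_card]
          exact Finset.card_le_card (Finset.filter_subset _ _)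
        exact_mod_cast h1
      have hSE0 : (0:ℝ) ≤ (((G j).SEs H).card : ℝ) := Nat.cast_nonneg _
      have hHE0 : (0:ℝ) ≤ (((G j).HEs H).card : ℝ) := Nat.cast_nonneg _
      have hT30 : (0:ℝ) ≤ (((G j).T3s H).card : ℝ) := Nat.cast_nonneg _
      have hp2 : (0:ℝ) ≤ p^2 := sq_nonneg p
      have hp3 : (0:ℝ) ≤ p^3 := pow_nonneg hp0 3
      have hp4nn : (0:ℝ) ≤ p^4 := pow_nonneg hp0 4
      have hT3 : (((G j).T3s H).card : ℝ) ≤ k * Real.sqrt e * (2 * e) := by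
        have h1 := (G j).T3s_card H
        have h2 : ((((G j).T3s H).card : ℕ) : ℝ) =
            ∑ i ∈ univ.filter (fun i => i ∉ H), (((G j).deg i : ℝ))^2 := by
          rw [h1]
          push_cast
          rfl
        rw [h2]
        calc ∑ i ∈ univ.filter (fun i => i ∉ H), (((G j).deg i : ℝ))^2
            ≤ ∑ i ∈ univ.filter (fun i => i ∉ H),
                (k * Real.sqrt e) * ((G j).deg i : ℝ) := by
              apply Finset.sum_le_sum
              intro i hi
              simp only [mem_filter, mem_univ, true_and, hHdef, not_lt] at hi
              have hd0 : (0:ℝ) ≤ ((G j).deg i : ℝ) := Nat.cast_nonneg _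
              rw [pow_two]
              exact mul_le_mul_of_nonneg_right hi hd0
          _ ≤ ∑ i : Fin (G j).n, (k * Real.sqrt e) * ((G j).deg i : ℝ) := by
              apply Finset.sum_le_sum_of_subset_of_nonneg (Finset.filter_subset _ _)
              intro i _ _
              have hd0 : (0:ℝ) ≤ ((G j).deg i : ℝ) := Nat.cast_nonneg _
              exact mul_nonneg (mul_nonneg hk0.le (Real.sqrt_nonneg _)) hd0
          _ = k * Real.sqrt e * (2 * e) := by
              rw [← Finset.mul_sum, hsum2e]
      have hub := upperBound (G j) hp0 hM0 H
      rw [hq] at hub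
      have hA : p^2 * (((G j).HEs H).card : ℝ) ≤ ε / 2 := by
        have h1 : p^2 * (((G j).HEs H).card : ℝ) ≤ p^2 * (2 * (ε₀ * e)) := by
          apply mul_le_mul_of_nonneg_left _ hp2
          linarith
        have h2 : p^2 * (2 * (ε₀ * e)) = r^2 * ε₀ := by
          rw [hpsq]
          field_simp
        have h3 : r^2 * ε₀ ≤ ε / 2 := by
          rw [hε₀def, mul_div_assoc', div_le_div_iff₀ (by positivity) (by norm_num)]
          linarith [hε.le]
        linarith
      have hpse : p * Real.sqrt e ≤ r := by
        rw [hpdef, hsplit2, div_mul_eq_mul_div, div_le_iff₀ (by positivity)]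
        have h1 := mul_le_mul_of_nonneg_left hs21 (mul_nonneg hr.le hsepos.le)
        linarith [h1]
      have hB1 : p^2 * (((G j).SEs H).card : ℝ) ≤ r^2 / 2 := by
        rw [hpsq, div_mul_eq_mul_div, div_le_div_iff₀ h2e (by norm_num)]
        have h1 := mul_le_mul_of_nonneg_left hSE (sq_nonneg r)
        linarith [h1]
      have hB2 : p^3 * (((G j).T3s H).card : ℝ) ≤ k * r^3 := by
        have h1 : p^3 * (((G j).T3s H).card : ℝ) ≤ p^3 * (k * Real.sqrt e * (2 * e)) :=
          mul_le_mul_of_nonneg_left hT3 hp3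
        have h2 : p^3 * (k * Real.sqrt e * (2 * e)) = p^2 * (p * Real.sqrt e) * (k * 2 * e) := by
          ring
        have h3 : p^2 * (p * Real.sqrt e) * (k * 2 * e) ≤ (r^2/(2*e)) * r * (k * 2 * e) := by
          rw [← hpsq]
          apply mul_le_mul_of_nonneg_right _
            (mul_nonneg (mul_nonneg hk0.le (by norm_num)) he0)
          exact mul_le_mul_of_nonneg_left hpse hp2
        have h4 : (r^2/(2*e)) * r * (k * 2 * e) = k * r^3 := by
          field_simp
        linarith
      have hp4 : p^4 = r^4 / (4 * e^2) := by
        have h0 : p^4 = (p^2)^2 := by ring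
        rw [h0, hpsq, div_pow,
          show ((2:ℝ)*e)^2 = 4*e^2 by ring, show ((r:ℝ)^2)^2 = r^4 by ring]
      have hB3 : p^4 * ((((G j).SEs H).card : ℝ)^2 +
          (((G j).SEs H).card : ℝ) * (((G j).HEs H).card : ℝ)) ≤ r^4/4 + ε₀ * r^4/2 := by
        have hse2 : (((G j).SEs H).card : ℝ)^2 ≤ e^2 := by
          rw [pow_two, pow_two]
          exact mul_le_mul hSE hSE hSE0 he0
        have hseh : (((G j).SEs H).card : ℝ) * (((G j).HEs H).card : ℝ) ≤
            e * (2 * (ε₀ * e)) := by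
          have hh : (((G j).HEs H).card : ℝ) ≤ 2 * (ε₀ * e) := by linarith
          have := mul_le_mul hSE hh hHE0 he0
          linarith
        have h1 : p^4 * ((((G j).SEs H).card : ℝ)^2 +
            (((G j).SEs H).card : ℝ) * (((G j).HEs H).card : ℝ)) ≤
            p^4 * (e^2 + e * (2 * (ε₀ * e))) := by
          apply mul_le_mul_of_nonneg_left _ hp4nn
          linarith
        have h2 : p^4 * (e^2 + e * (2 * (ε₀ * e))) = r^4/4 + ε₀ * r^4/2 := by
          rw [hp4]
          field_simp
          ring
        linarith
      have hnum : 2 * (p^2 * (((G j).SEs H).card : ℝ)) + 2 * (p^3 * (((G j).T3s H).card : ℝ))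
          + p^4 * ((((G j).SEs H).card : ℝ)^2 +
              (((G j).SEs H).card : ℝ) * (((G j).HEs H).card : ℝ)) ≤ C := by
        rw [hCdef]
        linarith
      have hnum0 : 0 ≤ 2 * (p^2 * (((G j).SEs H).card : ℝ)) +
          2 * (p^3 * (((G j).T3s H).card : ℝ))
          + p^4 * ((((G j).SEs H).card : ℝ)^2 +
              (((G j).SEs H).card : ℝ) * (((G j).HEs H).card : ℝ)) := by
        apply add_nonneg
        apply add_nonneg
        · exact mul_nonneg (by norm_num) (mul_nonneg hp2 hSE0)
        · exact mul_nonneg (by norm_num) (mul_nonneg hp3 hT30)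
        · exact mul_nonneg hp4nn (add_nonneg (sq_nonneg _) (mul_nonneg hSE0 hHE0))
      have hCM : C / M ≤ ε / 4 := by
        rw [div_le_div_iff₀ hM0 (by norm_num)]
        have h1 : 4 * C = (4 * C / ε) * ε := by field_simp
        have h2 : (4 * C / ε) * ε ≤ M * ε := mul_le_mul_of_nonneg_right hM2 hε.le
        linarith
      have hdivle : (2 * (p^2 * (((G j).SEs H).card : ℝ)) +
          2 * (p^3 * (((G j).T3s H).card : ℝ))
          + p^4 * ((((G j).SEs H).card : ℝ)^2 +
              (((G j).SEs H).card : ℝ) * (((G j).HEs H).card : ℝ))) / M ≤ C / M := by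
        gcongr
      calc expEdgeTail (G j) p M ≤ _ := hub
        _ ≤ ε / 2 + ε / 4 := by linarith
        _ ≤ ε := by linarith
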